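/- Let 0 < λ < 1, 0 ≤ k ≤ 1 with λ² > 2 - 1/k² (equivalently (1-λ²)k²/(1-k²) < 1 when k < 1), ν > -1 with (1-λ²)|ν|/(ν+1) < 1, and additionally 1/2 ≤ k² < 1 and (ν+1)k²/(|ν|(1-k²)) > 1. Then for every positive integer N the remainder R_{2,N} = -(√(1-λ²)/√(1-k²)) Σ_{m=N}^{∞} ((1-λ²)^m/(2m+1)) Σ_{n=0}^{m} (ν^{m-n}/(1+ν)^{m-n+1}) ₂F₁(-n,1/2;1;1/(1-k²)) satisfies |R_{2,N}| ≤ ((1-λ²)^{N+1/2}/(2N+1)) (k²/(1-k²))^{N+1/2} · (1/((1+ν)k)) · [1-(1-λ²)k²/(1-k²)]^{-1} · [1-|ν|(1-k²)/((ν+1)k²)]^{-1}. -/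

import Mathlib

open Finset Real

noncomputable def poch (a : ℝ) (k : ℕ) : ℝ := ∏ i ∈ Finset.range k, (a + i)

/-- Terminating hypergeometric polynomial ₂F₁(-n, 1/2; 1; x). -/
noncomputable def termF (n : ℕ) (x : ℝ) : ℝ :=
  ∑ i ∈ Finset.range (n + 1),
    poch (-(n : ℝ)) i * poch (1 / 2) i / ((Nat.factorial i) * (Nat.factorial i)) * x ^ i

lemma poch_zero (a : ℝ) : poch a 0 = 1 := by simp [poch]

lemma poch_succ (a : ℝ) (k : ℕ) : poch a (k+1) = poch a k * (a + k) := by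
  simp [poch, Finset.prod_range_succ]

lemma poch_half_nonneg (k : ℕ) : 0 ≤ poch (1/2) k := by
  apply Finset.prod_nonneg; intro i _; positivity

noncomputable def aa (j : ℕ) : ℝ := poch (1/2) j / (Nat.factorial j)

lemma aa_nonneg (j : ℕ) : 0 ≤ aa j :=
  div_nonneg (poch_half_nonneg j) (by positivity)

lemma aa_zero : aa 0 = 1 := by simp [aa, poch_zero]

lemma poch_neg_nat (n i : ℕ) (h : i ≤ n) :
    poch (-(n : ℝ)) i = (-1)^i * (n.choose i) * (Nat.factorial i) := by
  induction i with
  | zero => simp [poch_zero]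
  | succ i ih =>
      have hi : i ≤ n := Nat.le_of_succ_le h
      rw [poch_succ, ih hi]
      have key : (n.choose (i+1) : ℝ) * (i+1) = (n.choose i) * ((n : ℝ) - i) := by
        have h2 : ((n.choose (i+1) * (i+1) : ℕ) : ℝ) = ((n.choose i * (n - i) : ℕ) : ℝ) := by
          exact_mod_cast congrArg (Nat.cast : ℕ → ℝ) (Nat.choose_succ_right_eq n i)
        push_cast [Nat.cast_sub hi] at h2
        push_cast; linarith
      rw [Nat.factorial_succ]
      push_cast
      linear_combination ((-1:ℝ)^i * (Nat.factorial i : ℝ)) * key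

lemma diff_id (m : ℕ) : ∀ j : ℕ,
    ∑ l ∈ Finset.range (m+1), (-1:ℝ)^l * ((m.choose l : ℕ) : ℝ) * aa (j+l)
      = poch (1/2) j * poch (1/2) m / (Nat.factorial (j+m)) := by
  induction m with
  | zero => intro j; simp [aa, poch_zero]
  | succ m ih =>
      intro j
      have peel : ∑ l ∈ Finset.range (m+2), (-1:ℝ)^l * ((m+1).choose l : ℝ) * aa (j+l)
          = aa j + ∑ l ∈ Finset.range (m+1), (-1:ℝ)^(l+1) * (((m+1).choose (l+1) : ℕ) : ℝ) * aa (j+l+1) := by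
        rw [Finset.sum_range_succ' _ (m+1)]
        simp [← add_assoc, add_comm]
      rw [peel]
      have split : ∀ l, (((m+1).choose (l+1) : ℕ) : ℝ) = (m.choose (l+1) : ℝ) + (m.choose l : ℝ) := by
        intro l; rw [Nat.choose_succ_succ]; push_cast; ring
      have e1 : ∑ l ∈ Finset.range (m+1), (-1:ℝ)^(l+1) * (((m+1).choose (l+1) : ℕ) : ℝ) * aa (j+l+1)
          = (∑ l ∈ Finset.range (m+1), (-1:ℝ)^(l+1) * (m.choose (l+1) : ℝ) * aa (j+l+1))
            + (∑ l ∈ Finset.range (m+1), (-1:ℝ)^(l+1) * (m.choose l : ℝ) * aa (j+l+1)) := by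
        rw [← Finset.sum_add_distrib]
        apply Finset.sum_congr rfl; intro l _; rw [split]; ring
      -- second piece is -(ih (j+1))
      have e2 : ∑ l ∈ Finset.range (m+1), (-1:ℝ)^(l+1) * (m.choose l : ℝ) * aa (j+l+1)
          = -(poch (1/2) (j+1) * poch (1/2) m / (Nat.factorial (j+1+m))) := by
        rw [← ih (j+1)]
        rw [← Finset.sum_neg_distrib]
        apply Finset.sum_congr rfl; intro l _
        have : j + 1 + l = j + l + 1 := by ring
        rw [this]; ring
      -- first piece: shift
      have e3 : ∑ l ∈ Finset.range (m+1), (-1:ℝ)^(l+1) * (m.choose (l+1) : ℝ) * aa (j+l+1)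
          = (poch (1/2) j * poch (1/2) m / (Nat.factorial (j+m))) - aa j := by
        have expand : ∑ l ∈ Finset.range (m+1), (-1:ℝ)^l * (m.choose l : ℝ) * aa (j+l)
            = aa j + ∑ l ∈ Finset.range m, (-1:ℝ)^(l+1) * (m.choose (l+1) : ℝ) * aa (j+l+1) := by
          rw [Finset.sum_range_succ' _ m]
          simp [← add_assoc, add_comm]
        have zlast : ((-1:ℝ))^(m+1) * (m.choose (m+1) : ℝ) * aa (j+m+1) = 0 := by
          simp [Nat.choose_eq_zero_of_lt (Nat.lt_succ_self m)]
        rw [Finset.sum_range_succ, zlast, add_zero]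
        rw [ih j] at expand
        linarith
      rw [e1, e2, e3]
      -- now algebra with poch recurrences
      have hfac : ((Nat.factorial (j+m+1) : ℕ) : ℝ) = (Nat.factorial (j+m) : ℝ) * (j+m+1) := by
        rw [show j+m+1 = (j+m)+1 from rfl, Nat.factorial_succ]; push_cast; ring
      have hpj : poch (1/2) (j+1) = poch (1/2) j * (1/2 + j) := poch_succ _ _
      have hpm : poch (1/2) (m+1) = poch (1/2) m * (1/2 + m) := poch_succ _ _
      have hj1m : j + 1 + m = j + m + 1 := by ring
      rw [hj1m, hpj, hpm, show j + (m+1) = j + m + 1 from rfl, hfac]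
      have hf0 : (0:ℝ) < (Nat.factorial (j+m) : ℝ) := by positivity
      field_simp
      ring

lemma termF_expand (n : ℕ) (x : ℝ) :
    termF n x = ∑ i ∈ Finset.range (n+1), (-1:ℝ)^i * (n.choose i) * aa i * x^i := by
  unfold termF
  apply Finset.sum_congr rfl; intro i hi
  have hi' : i ≤ n := Nat.lt_succ_iff.mp (Finset.mem_range.mp hi)
  rw [poch_neg_nat n i hi']
  unfold aa
  have h : (Nat.factorial i : ℝ) ≠ 0 := by positivity
  field_simp

lemma innerChooseSum (n j : ℕ) (hj : j ≤ n) :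
    ∑ i ∈ Finset.range (n+1), (-1:ℝ)^i * (n.choose i) * aa i * ((i.choose j : ℕ) : ℝ)
      = (-1:ℝ)^j * aa j * aa (n - j) := by
  have hsplit : n + 1 = j + (n - j + 1) := by omega
  rw [hsplit, Finset.sum_range_add]
  have h1 : ∑ i ∈ Finset.range j, (-1:ℝ)^i * (n.choose i) * aa i * ((i.choose j : ℕ) : ℝ) = 0 := by
    apply Finset.sum_eq_zero; intro i hi
    rw [Nat.choose_eq_zero_of_lt (Finset.mem_range.mp hi)]; simp
  rw [h1, zero_add]
  have h2 : ∀ l ∈ Finset.range (n - j + 1),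
      (-1:ℝ)^(j+l) * ((n.choose (j+l) : ℕ) : ℝ) * aa (j+l) * (((j+l).choose j : ℕ) : ℝ)
        = ((-1:ℝ)^j * (n.choose j)) * ((-1:ℝ)^l * (((n-j).choose l : ℕ) : ℝ) * aa (j+l)) := by
    intro l hl
    have hln : j + l ≤ n := by have := Finset.mem_range.mp hl; omega
    have hmul := Nat.choose_mul (n := n) (Nat.le_add_right j l)
    have hmul' : ((n.choose (j+l) : ℕ) : ℝ) * (((j+l).choose j : ℕ) : ℝ)
        = ((n.choose j : ℕ) : ℝ) * (((n-j).choose l : ℕ) : ℝ) := by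
      have h3 := congrArg (Nat.cast : ℕ → ℝ) hmul
      push_cast at h3
      simpa [Nat.add_sub_cancel_left] using h3
    rw [pow_add]
    linear_combination ((-1:ℝ)^j * (-1:ℝ)^l * aa (j+l)) * hmul'
  rw [Finset.sum_congr rfl h2, ← Finset.mul_sum, diff_id (n-j) j]
  have hjnj : j + (n - j) = n := Nat.add_sub_cancel' hj
  rw [hjnj]
  have hfac := Nat.choose_mul_factorial_mul_factorial hj
  have hfac' : ((n.choose j : ℕ) : ℝ) * (Nat.factorial j) * (Nat.factorial (n-j)) = (Nat.factorial n : ℝ) := by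
    exact_mod_cast congrArg (Nat.cast : ℕ → ℝ) hfac
  unfold aa
  have h4 : (Nat.factorial j : ℝ) ≠ 0 := by positivity
  have h5 : (Nat.factorial (n-j) : ℝ) ≠ 0 := by positivity
  have h6 : (Nat.factorial n : ℝ) ≠ 0 := by positivity
  field_simp
  linear_combination (poch (1/2) j * poch (1/2) (n-j)) * hfac'

lemma termF_key (n : ℕ) (c : ℝ) :
    termF n (1+c) = ∑ j ∈ Finset.range (n+1), (-1:ℝ)^j * aa j * aa (n-j) * c^j := by
  rw [termF_expand]
  have hpow : ∀ i ∈ Finset.range (n+1),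
      (-1:ℝ)^i * (n.choose i) * aa i * (1+c)^i
        = ∑ j ∈ Finset.range (n+1), ((-1:ℝ)^i * (n.choose i) * aa i * ((i.choose j : ℕ) : ℝ)) * c^j := by
    intro i hi
    have hi' : i + 1 ≤ n + 1 := Finset.mem_range.mp hi
    have e : (1+c)^i = ∑ j ∈ Finset.range (n+1), ((i.choose j : ℕ) : ℝ) * c^j := by
      rw [show (1+c) = (c+1) by ring, add_pow]
      rw [Finset.sum_subset (Finset.range_subset_range.mpr hi')]
      · apply Finset.sum_congr rfl; intro j _; ring
      · intro j _ hj
        have hij : i < j := by simp [Finset.mem_range] at hj; omega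
        rw [Nat.choose_eq_zero_of_lt hij]
        simp
    rw [e, Finset.mul_sum]
    apply Finset.sum_congr rfl; intro j _; ring
  rw [Finset.sum_congr rfl hpow, Finset.sum_comm]
  apply Finset.sum_congr rfl; intro j hj
  have hj' : j ≤ n := Nat.lt_succ_iff.mp (Finset.mem_range.mp hj)
  rw [← Finset.sum_mul, innerChooseSum n j hj']

lemma termF_at_zero (n : ℕ) : termF n 0 = 1 := by
  unfold termF
  rw [Finset.sum_eq_single 0]
  · simp [poch_zero]
  · intro i _ hi
    rw [zero_pow hi]; ring
  · intro h; simp at h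

lemma sum_aa (n : ℕ) : ∑ j ∈ Finset.range (n+1), aa j * aa (n-j) = 1 := by
  have h := termF_key n (-1)
  rw [show (1 : ℝ) + -1 = 0 by ring, termF_at_zero] at h
  rw [h]
  apply Finset.sum_congr rfl; intro j _
  have : ((-1:ℝ))^j * (-1)^j = 1 := by
    rw [← pow_add, Eq.symm (two_mul j), pow_mul]; norm_num
  linear_combination (-(aa j * aa (n-j))) * this

lemma termF_bound (n : ℕ) (c : ℝ) (hc : 1 ≤ c) : |termF n (1+c)| ≤ c^n := by
  rw [termF_key]
  refine le_trans (Finset.abs_sum_le_sum_abs _ _) ?_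
  have hc0 : (0:ℝ) < c := lt_of_lt_of_le one_pos hc
  have step : ∀ j ∈ Finset.range (n+1), |(-1:ℝ)^j * aa j * aa (n-j) * c^j| ≤ aa j * aa (n-j) * c^n := by
    intro j hj
    have hj' : j ≤ n := Nat.lt_succ_iff.mp (Finset.mem_range.mp hj)
    rw [abs_mul, abs_mul, abs_mul, abs_pow, abs_neg, abs_one, one_pow, one_mul,
        abs_of_nonneg (aa_nonneg j), abs_of_nonneg (aa_nonneg (n-j)), abs_of_pos (pow_pos hc0 j)]
    have := pow_le_pow_right₀ hc hj'
    nlinarith [aa_nonneg j, aa_nonneg (n-j), mul_nonneg (aa_nonneg j) (aa_nonneg (n-j))]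
  refine le_trans (Finset.sum_le_sum step) ?_
  rw [← Finset.sum_mul, sum_aa, one_mul]

set_option maxHeartbeats 2000000 in
theorem remainder_bound_region_two_case_a (k lam ν : ℝ)
    (hlam0 : 0 < lam) (hlam1 : lam < 1)
    (hk0 : 0 ≤ k) (hk01 : k ≤ 1) (hk : 1 / 2 ≤ k ^ 2) (hk1 : k ^ 2 < 1)
    (hreg : (1 - lam ^ 2) * k ^ 2 / (1 - k ^ 2) < 1)
    (hν : -1 < ν) (hν2 : (1 - lam ^ 2) * |ν| / (ν + 1) < 1)
    (hcase : (ν + 1) * k ^ 2 / (|ν| * (1 - k ^ 2)) > 1)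
    (N : ℕ) (hN : 1 ≤ N) :
    |-(Real.sqrt (1 - lam ^ 2) / Real.sqrt (1 - k ^ 2)) *
        ∑' m : ℕ, ((1 - lam ^ 2) ^ (m + N) / (2 * (m + N) + 1)) *
          ∑ n ∈ Finset.range (m + N + 1),
            ν ^ (m + N - n) / (1 + ν) ^ (m + N - n + 1) *
              termF n (1 / (1 - k ^ 2))| ≤
      ((1 - lam ^ 2) ^ ((N : ℝ) + 1 / 2) / (2 * N + 1)) *
        (k ^ 2 / (1 - k ^ 2)) ^ ((N : ℝ) + 1 / 2) *
        (1 / ((1 + ν) * k)) *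
        (1 - (1 - lam ^ 2) * k ^ 2 / (1 - k ^ 2))⁻¹ *
        (1 - |ν| * (1 - k ^ 2) / ((ν + 1) * k ^ 2))⁻¹ := by
  -- basic facts
  set q : ℝ := 1 - lam ^ 2 with hqdef
  have hq0 : 0 < q := by nlinarith
  have hk2 : 0 < 1 - k ^ 2 := by linarith
  have hkpos : 0 < k := by nlinarith
  set c : ℝ := k ^ 2 / (1 - k ^ 2) with hcdef
  have hc1 : 1 ≤ c := (one_le_div hk2).mpr (by nlinarith)
  have hc0 : 0 < c := lt_of_lt_of_le one_pos hc1
  have hx : 1 / (1 - k ^ 2) = 1 + c := by rw [hcdef]; field_simp; ring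
  have hqc : q * c < 1 := by rw [hcdef, ← mul_div_assoc]; exact hreg
  have hqc0 : 0 ≤ q * c := le_of_lt (mul_pos hq0 hc0)
  have hν1 : 0 < ν + 1 := by linarith
  have hνabs : 0 < |ν| := by
    rcases eq_or_lt_of_le (abs_nonneg ν) with h | h
    · exfalso; rw [← h] at hcase; simp at hcase; linarith
    · exact h
  set ρ : ℝ := |ν| * (1 - k ^ 2) / ((ν + 1) * k ^ 2) with hρdef
  have hρ0 : 0 ≤ ρ := by positivity
  have hρ1 : ρ < 1 := by
    rw [hρdef, div_lt_one (by positivity)]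
    have hd : 0 < |ν| * (1 - k ^ 2) := by positivity
    rw [gt_iff_lt, one_lt_div hd] at hcase
    linarith
  have hρc : |ν| / (ν + 1) = ρ * c := by
    rw [hρdef, hcdef]; field_simp
  -- bound on the inner sum
  have hS : ∀ M : ℕ,
      |∑ n ∈ Finset.range (M + 1), ν ^ (M - n) / (1 + ν) ^ (M - n + 1) * termF n (1 / (1 - k ^ 2))|
        ≤ c ^ M / (ν + 1) * (1 - ρ)⁻¹ := by
    intro M
    refine le_trans (Finset.abs_sum_le_sum_abs _ _) ?_
    have step : ∀ n ∈ Finset.range (M + 1),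
        |ν ^ (M - n) / (1 + ν) ^ (M - n + 1) * termF n (1 / (1 - k ^ 2))|
          ≤ (c ^ M / (ν + 1)) * ρ ^ (M - n) := by
      intro n hn
      have hn' : n ≤ M := Nat.lt_succ_iff.mp (Finset.mem_range.mp hn)
      rw [abs_mul, abs_div, abs_pow, abs_pow, abs_of_pos (by linarith : (0:ℝ) < 1 + ν), hx]
      have h1 : |ν| ^ (M - n) / (1 + ν) ^ (M - n + 1) = (ρ * c) ^ (M - n) / (ν + 1) := by
        rw [← hρc, div_pow, pow_succ]
        rw [show (1:ℝ) + ν = ν + 1 by ring]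
        field_simp
      rw [h1]
      have h2 : |termF n (1 + c)| ≤ c ^ n := termF_bound n c hc1
      have h3 : (0:ℝ) ≤ (ρ * c) ^ (M - n) / (ν + 1) := by positivity
      refine le_trans (mul_le_mul_of_nonneg_left h2 h3) (le_of_eq ?_)
      rw [mul_pow]
      have h4 : ρ ^ (M - n) * c ^ (M - n) * c ^ n = ρ ^ (M - n) * c ^ M := by
        rw [mul_assoc, ← pow_add, Nat.sub_add_cancel hn']
      calc ρ ^ (M - n) * c ^ (M - n) / (ν + 1) * c ^ n
          = ρ ^ (M - n) * c ^ (M - n) * c ^ n / (ν + 1) := by ring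
        _ = ρ ^ (M - n) * c ^ M / (ν + 1) := by rw [h4]
        _ = c ^ M / (ν + 1) * ρ ^ (M - n) := by ring
    refine le_trans (Finset.sum_le_sum step) ?_
    rw [← Finset.mul_sum]
    have hgeom : ∑ n ∈ Finset.range (M + 1), ρ ^ (M - n) ≤ (1 - ρ)⁻¹ := by
      have hrefl : ∑ n ∈ Finset.range (M + 1), ρ ^ (M - n)
          = ∑ n ∈ Finset.range (M + 1), ρ ^ n := by
        have := Finset.sum_range_reflect (fun n => ρ ^ n) (M + 1)
        simp only [Nat.add_sub_cancel] at this
        exact this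
      rw [hrefl]
      calc ∑ n ∈ Finset.range (M + 1), ρ ^ n
          ≤ ∑' n : ℕ, ρ ^ n := Summable.sum_le_tsum _ (fun n _ => pow_nonneg hρ0 n)
              (summable_geometric_of_lt_one hρ0 hρ1)
        _ = (1 - ρ)⁻¹ := tsum_geometric_of_lt_one hρ0 hρ1
    have hpos : 0 ≤ c ^ M / (ν + 1) := by positivity
    exact mul_le_mul_of_nonneg_left hgeom hpos

  set F : ℕ → ℝ := fun m => q ^ (m + N) / (2 * ((m:ℝ) + (N:ℝ)) + 1) *
      ∑ n ∈ Finset.range (m + N + 1),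
        ν ^ (m + N - n) / (1 + ν) ^ (m + N - n + 1) * termF n (1 / (1 - k ^ 2)) with hFdef
  set B : ℝ := (q * c) ^ N / ((2 * (N:ℝ) + 1) * (ν + 1)) * (1 - ρ)⁻¹ with hBdef
  have hB0 : 0 ≤ B := by
    have : 0 < 1 - ρ := by linarith
    positivity
  set G : ℕ → ℝ := fun m => B * (q * c) ^ m with hGdef
  have hFG : ∀ m : ℕ, |F m| ≤ G m := by
    intro m
    rw [hFdef]
    simp only []
    have hden : (0:ℝ) < 2 * ((m:ℝ) + (N:ℝ)) + 1 := by positivity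
    rw [abs_mul, abs_div, abs_of_pos hden, abs_pow, abs_of_pos hq0]
    have h1 : |∑ n ∈ Finset.range (m + N + 1),
        ν ^ (m + N - n) / (1 + ν) ^ (m + N - n + 1) * termF n (1 / (1 - k ^ 2))|
          ≤ c ^ (m + N) / (ν + 1) * (1 - ρ)⁻¹ := hS (m + N)
    have h2 : q ^ (m + N) / (2 * ((m:ℝ) + (N:ℝ)) + 1) ≤ q ^ (m + N) / (2 * (N:ℝ) + 1) := by
      apply div_le_div_of_nonneg_left (by positivity) (by positivity)
      have : (0:ℝ) ≤ (m:ℝ) := Nat.cast_nonneg m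
      linarith
    have h3 : (0:ℝ) ≤ q ^ (m + N) / (2 * ((m:ℝ) + (N:ℝ)) + 1) := by positivity
    have h4 : (0:ℝ) ≤ c ^ (m + N) / (ν + 1) * (1 - ρ)⁻¹ := by
      have : 0 < 1 - ρ := by linarith
      positivity
    calc q ^ (m + N) / (2 * ((m:ℝ) + (N:ℝ)) + 1) * |∑ n ∈ Finset.range (m + N + 1),
            ν ^ (m + N - n) / (1 + ν) ^ (m + N - n + 1) * termF n (1 / (1 - k ^ 2))|
        ≤ q ^ (m + N) / (2 * ((m:ℝ) + (N:ℝ)) + 1) * (c ^ (m + N) / (ν + 1) * (1 - ρ)⁻¹) :=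
          mul_le_mul_of_nonneg_left h1 h3
      _ ≤ q ^ (m + N) / (2 * (N:ℝ) + 1) * (c ^ (m + N) / (ν + 1) * (1 - ρ)⁻¹) :=
          mul_le_mul_of_nonneg_right h2 h4
      _ = G m := by
          rw [hGdef, hBdef]
          simp only []
          rw [mul_pow q c N, mul_pow q c m, pow_add q m N, pow_add c m N]
          field_simp
  have hGsum : Summable G := (summable_geometric_of_lt_one hqc0 hqc).mul_left B
  have hFsum : Summable F := Summable.of_norm_bounded hGsum (by
    intro m; rw [Real.norm_eq_abs]; exact hFG m)
  have hFabs : Summable (fun m => |F m|) := by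
    apply Summable.of_nonneg_of_le (fun m => abs_nonneg _) hFG hGsum
  have htsum : |∑' m : ℕ, F m| ≤ B * (1 - q * c)⁻¹ := by
    calc |∑' m : ℕ, F m| ≤ ∑' m : ℕ, |F m| := by
          have h := norm_tsum_le_tsum_norm (f := F) (by
            simpa [Real.norm_eq_abs] using hFabs)
          simpa [Real.norm_eq_abs] using h
      _ ≤ ∑' m : ℕ, G m := Summable.tsum_le_tsum hFG hFabs hGsum
      _ = B * (1 - q * c)⁻¹ := by
          rw [hGdef]
          rw [tsum_mul_left, tsum_geometric_of_lt_one hqc0 hqc]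
  -- assemble
  have hsq : 0 ≤ Real.sqrt q / Real.sqrt (1 - k ^ 2) := by positivity
  rw [abs_mul, abs_neg, abs_of_nonneg hsq]
  have hmain : Real.sqrt q / Real.sqrt (1 - k ^ 2) * |∑' m : ℕ, F m|
      ≤ Real.sqrt q / Real.sqrt (1 - k ^ 2) * (B * (1 - q * c)⁻¹) :=
    mul_le_mul_of_nonneg_left htsum hsq
  refine le_trans hmain (le_of_eq ?_)
  -- now pure algebra with rpow
  have hqrpow : q ^ ((N:ℝ) + 1 / 2) = q ^ (N:ℕ) * Real.sqrt q := by
    rw [Real.rpow_add hq0, Real.rpow_natCast, Real.sqrt_eq_rpow]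
  have hcrpow : c ^ ((N:ℝ) + 1 / 2) = c ^ (N:ℕ) * Real.sqrt c := by
    rw [Real.rpow_add hc0, Real.rpow_natCast, Real.sqrt_eq_rpow]
  have hsqc : Real.sqrt c = k / Real.sqrt (1 - k ^ 2) := by
    rw [hcdef, show k ^ 2 / (1 - k ^ 2) = k ^ 2 * (1 - k ^ 2)⁻¹ by ring,
      Real.sqrt_mul (by positivity), Real.sqrt_sq hk0, Real.sqrt_inv]
    ring
  rw [hqrpow, hcrpow, hsqc, hBdef]
  have hkc : q * k ^ 2 / (1 - k ^ 2) = q * c := by rw [hcdef]; ring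
  rw [hkc]
  have hsqk : Real.sqrt (1 - k ^ 2) ≠ 0 := by positivity
  have hν1' : (ν:ℝ) + 1 ≠ 0 := ne_of_gt hν1
  have h2N : (2 * (N:ℝ) + 1) ≠ 0 := by positivity
  have hρ1' : (1 - ρ) ≠ 0 := by intro h; linarith [hρ1]
  have hqc1 : (1 - q * c) ≠ 0 := by intro h; linarith [hqc]
  have hkne : k ≠ 0 := ne_of_gt hkpos
  have h1ν : (1:ℝ) + ν = ν + 1 := by ring
  rw [h1ν, mul_pow q c N]
  clear_value F B G
  clear hFdef hBdef hGdef hqdef hcdef hρdef hρc hkc hS hFG htsum hmain hreg hν2 hqc hρ1 hx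
  clear_value q c ρ
  field_simp
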